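/- Let A be a symmetrized Hopf algebroid such that the R-module A^R (via a·r = a s_R(r)) is finitely generated projective. Then a left integral ℓ ∈ I^L(A) is non-degenerate if and only if the single map ℓ_R : A* → A, φ* ↦ φ* ⇀ ℓ = ℓ⁽²⁾ t_R(φ*(ℓ⁽¹⁾)), is bijective (i.e., bijectivity of ℓ_R automatically implies bijectivity of _Rℓ). -/

import Mathlib

open scoped TensorProduct

namespace HopfAlgd

variable (A : Type*) [Ring A]

/-- `x ⊗ (y ⊗ z) ↦ (y * x) ⊗ z`. -/
noncomputable def m13 : A ⊗[ℤ] (A ⊗[ℤ] A) →ₗ[ℤ] A ⊗[ℤ] A :=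
  (LinearMap.rTensor A (LinearMap.mul' ℤ A)) ∘ₗ
  (TensorProduct.assoc ℤ A A A).symm.toLinearMap ∘ₗ
  (LinearMap.lTensor A (TensorProduct.comm ℤ A A).toLinearMap) ∘ₗ
  (TensorProduct.assoc ℤ A A A).toLinearMap ∘ₗ
  (TensorProduct.comm ℤ A (A ⊗[ℤ] A)).toLinearMap

/-- `x ⊗ (y ⊗ z) ↦ y ⊗ (z * x)`. -/
noncomputable def m23 : A ⊗[ℤ] (A ⊗[ℤ] A) →ₗ[ℤ] A ⊗[ℤ] A :=
  (LinearMap.lTensor A (LinearMap.mul' ℤ A)) ∘ₗ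
  (TensorProduct.assoc ℤ A A A).toLinearMap ∘ₗ
  (TensorProduct.comm ℤ A (A ⊗[ℤ] A)).toLinearMap

/-- `(x ⊗ y) ⊗ z ↦ (x * z) ⊗ y`. -/
noncomputable def m13' : (A ⊗[ℤ] A) ⊗[ℤ] A →ₗ[ℤ] A ⊗[ℤ] A :=
  (LinearMap.rTensor A (LinearMap.mul' ℤ A)) ∘ₗ
  (TensorProduct.assoc ℤ A A A).symm.toLinearMap ∘ₗ
  (LinearMap.lTensor A (TensorProduct.comm ℤ A A).toLinearMap) ∘ₗ
  (TensorProduct.assoc ℤ A A A).toLinearMap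

/-- `(x ⊗ y) ⊗ z ↦ x ⊗ (y * z)`. -/
noncomputable def m23' : (A ⊗[ℤ] A) ⊗[ℤ] A →ₗ[ℤ] A ⊗[ℤ] A :=
  (LinearMap.lTensor A (LinearMap.mul' ℤ A)) ∘ₗ (TensorProduct.assoc ℤ A A A).toLinearMap

variable {A}

/-- The subgroup of `A ⊗[ℤ] A` implementing the tensor product over a base ring, where the
relevant right action on the first factor is `f` and left action on the second factor is `g`. -/
def trel {L : Type*} (f g : L → A → A) : Submodule ℤ (A ⊗[ℤ] A) :=
  Submodule.span ℤ {x | ∃ (l : L) (a b : A), x = f l a ⊗ₜ[ℤ] b - a ⊗ₜ[ℤ] g l b}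

/-- Analogue of `trel` for threefold tensor products. -/
def trel3 {L R : Type*} (f g : L → A → A) (f' g' : R → A → A) :
    Submodule ℤ (A ⊗[ℤ] (A ⊗[ℤ] A)) :=
  Submodule.span ℤ
    ({x | ∃ (l : L) (a b c : A),
        x = f l a ⊗ₜ[ℤ] (b ⊗ₜ[ℤ] c) - a ⊗ₜ[ℤ] (g l b ⊗ₜ[ℤ] c)} ∪
     {x | ∃ (r : R) (a b c : A),
        x = a ⊗ₜ[ℤ] (f' r b ⊗ₜ[ℤ] c) - a ⊗ₜ[ℤ] (b ⊗ₜ[ℤ] g' r c)})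

variable (A) in
/-- The data of a left bialgebroid: source and target maps, a chosen (Sweedler
representative of the) coproduct, and the counit. -/
structure LeftBialgebroidData (L : Type*) [Ring L] where
  s : L →+* A
  t : L →+ A
  t_one : t 1 = 1
  t_mul : ∀ l l', t (l * l') = t l' * t l
  st_comm : ∀ l l', s l * t l' = t l' * s l
  Δ : A →+ A ⊗[ℤ] A
  π : A →+ L

variable {L R : Type*} [Ring L] [Ring R]

/-- The subgroup of `A ⊗[ℤ] A` by which one quotients to get `A_L ⊗_L _L A`. -/
def LeftBialgebroidData.rel (B : LeftBialgebroidData A L) : Submodule ℤ (A ⊗[ℤ] A) :=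
  trel (fun l a => B.t l * a) (fun l b => B.s l * b)

def LeftBialgebroidData.rel3 (B : LeftBialgebroidData A L) :
    Submodule ℤ (A ⊗[ℤ] (A ⊗[ℤ] A)) :=
  trel3 (fun l a => B.t l * a) (fun l b => B.s l * b)
        (fun l a => B.t l * a) (fun l b => B.s l * b)

variable (A) in
/-- A left bialgebroid (Takeuchi `×_L`-bialgebra), with the comonoid structure encoded via a
chosen additive lift `Δ` of the coproduct `γ_L`; all equalities in `A ⊗_L A` are expressed
as membership of differences in the relation subgroup `rel`. -/
structure LeftBialgebroid (L : Type*) [Ring L] extends LeftBialgebroidData A L where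
  coassoc : ∀ a, Sub.sub ((LinearMap.lTensor A Δ.toIntLinearMap) (Δ a))
      ((TensorProduct.assoc ℤ A A A) ((LinearMap.rTensor A Δ.toIntLinearMap) (Δ a)))
      ∈ toLeftBialgebroidData.rel3
  cros : ∀ a l, (LinearMap.rTensor A (LinearMap.mulRight ℤ (t l))) (Δ a)
      - (LinearMap.lTensor A (LinearMap.mulRight ℤ (s l))) (Δ a) ∈ toLeftBialgebroidData.rel
  Δ_one : Δ 1 - (1 : A) ⊗ₜ[ℤ] (1 : A) ∈ toLeftBialgebroidData.rel
  Δ_mul : ∀ a b, Δ (a * b) - Δ a * Δ b ∈ toLeftBialgebroidData.rel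
  counit_s : ∀ a, LinearMap.mul' ℤ A
      ((LinearMap.rTensor A (s.toAddMonoidHom.comp π).toIntLinearMap) (Δ a)) = a
  counit_t : ∀ a, LinearMap.mul' ℤ A ((TensorProduct.comm ℤ A A)
      ((LinearMap.lTensor A (t.comp π).toIntLinearMap) (Δ a))) = a
  π_one : π 1 = 1
  π_s : ∀ a b, π (a * s (π b)) = π (a * b)
  π_t : ∀ a b, π (a * t (π b)) = π (a * b)
  π_bimod : ∀ l l' a, π (s l * (t l' * a)) = l * π a * l'

def LeftBialgebroid.rel (B : LeftBialgebroid A L) : Submodule ℤ (A ⊗[ℤ] A) :=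
  B.toLeftBialgebroidData.rel

variable (A) in
/-- The data of a right bialgebroid. -/
structure RightBialgebroidData (R : Type*) [Ring R] where
  s : R →+* A
  t : R →+ A
  t_one : t 1 = 1
  t_mul : ∀ r r', t (r * r') = t r' * t r
  st_comm : ∀ r r', s r * t r' = t r' * s r
  Δ : A →+ A ⊗[ℤ] A
  π : A →+ R

/-- The subgroup of `A ⊗[ℤ] A` by which one quotients to get `A^R ⊗_R ^R A`. -/
def RightBialgebroidData.rel (B : RightBialgebroidData A R) : Submodule ℤ (A ⊗[ℤ] A) :=
  trel (fun r a => a * B.s r) (fun r b => b * B.t r)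

def RightBialgebroidData.rel3 (B : RightBialgebroidData A R) :
    Submodule ℤ (A ⊗[ℤ] (A ⊗[ℤ] A)) :=
  trel3 (fun r a => a * B.s r) (fun r b => b * B.t r)
        (fun r a => a * B.s r) (fun r b => b * B.t r)

variable (A) in
/-- A right bialgebroid, with chosen additive lift `Δ` of the coproduct `γ_R`. -/
structure RightBialgebroid (R : Type*) [Ring R] extends RightBialgebroidData A R where
  coassoc : ∀ a, Sub.sub ((LinearMap.lTensor A Δ.toIntLinearMap) (Δ a))
      ((TensorProduct.assoc ℤ A A A) ((LinearMap.rTensor A Δ.toIntLinearMap) (Δ a)))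
      ∈ toRightBialgebroidData.rel3
  cros : ∀ a r, (LinearMap.rTensor A (LinearMap.mulLeft ℤ (s r))) (Δ a)
      - (LinearMap.lTensor A (LinearMap.mulLeft ℤ (t r))) (Δ a) ∈ toRightBialgebroidData.rel
  Δ_one : Δ 1 - (1 : A) ⊗ₜ[ℤ] (1 : A) ∈ toRightBialgebroidData.rel
  Δ_mul : ∀ a b, Δ (a * b) - Δ a * Δ b ∈ toRightBialgebroidData.rel
  counit_s : ∀ a, LinearMap.mul' ℤ A
      ((LinearMap.lTensor A (s.toAddMonoidHom.comp π).toIntLinearMap) (Δ a)) = a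
  counit_t : ∀ a, LinearMap.mul' ℤ A ((TensorProduct.comm ℤ A A)
      ((LinearMap.rTensor A (t.comp π).toIntLinearMap) (Δ a))) = a
  π_one : π 1 = 1
  π_s : ∀ a b, π (s (π a) * b) = π (a * b)
  π_t : ∀ a b, π (t (π a) * b) = π (a * b)
  π_bimod : ∀ r r' a, π (a * s r' * t r) = r * π a * r'

def RightBialgebroid.rel (B : RightBialgebroid A R) : Submodule ℤ (A ⊗[ℤ] A) :=
  B.toRightBialgebroidData.rel

/-- The expression `a ↦ ∑ (f a₍₁₎)₍₁'₎ a₍₂₎ ⊗ (f a₍₁₎)₍₂'₎` (applied to `Δ a`). -/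
noncomputable def axsExpr (Δ : A →+ A ⊗[ℤ] A) (f : A →+ A) :
    A ⊗[ℤ] A →ₗ[ℤ] A ⊗[ℤ] A :=
  m13' A ∘ₗ LinearMap.rTensor A (Δ.toIntLinearMap ∘ₗ f.toIntLinearMap)

/-- The expression `a ↦ ∑ (f a₍₂₎)₍₁'₎ ⊗ (f a₍₂₎)₍₂'₎ a₍₁₎` (applied to `Δ a`). -/
noncomputable def axsiExpr (Δ : A →+ A ⊗[ℤ] A) (f : A →+ A) :
    A ⊗[ℤ] A →ₗ[ℤ] A ⊗[ℤ] A :=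
  m23 A ∘ₗ LinearMap.lTensor A (Δ.toIntLinearMap ∘ₗ f.toIntLinearMap)

/-- Definition 4.1 of Böhm–Szlachányi: a Hopf algebroid is a left bialgebroid together with a
ring anti-automorphism `S` such that `S ∘ t_L = s_L` and the two antipode axioms hold. -/
structure IsHopfAlgebroid (B : LeftBialgebroid A L) (S : A ≃+ A) : Prop where
  anti_mul : ∀ a b, S (a * b) = S b * S a
  one_map : S 1 = 1
  S_t : ∀ l, S (B.t l) = B.s l
  axs : ∀ a, axsExpr B.Δ S.toAddMonoidHom (B.Δ a) - (1 : A) ⊗ₜ[ℤ] S a ∈ B.rel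
  axsi : ∀ a, axsiExpr B.Δ S.symm.toAddMonoidHom (B.Δ a) - S.symm a ⊗ₜ[ℤ] (1 : A) ∈ B.rel

/-- The relation subgroup for `A_L ⊗_L (_L A^R) ⊗_R (^R A)`. -/
def mixedRel₁ (Bl : LeftBialgebroidData A L) (Br : RightBialgebroidData A R) :
    Submodule ℤ (A ⊗[ℤ] (A ⊗[ℤ] A)) :=
  trel3 (fun l a => Bl.t l * a) (fun l b => Bl.s l * b)
        (fun r b => b * Br.s r) (fun r c => c * Br.t r)

/-- The relation subgroup for `A^R ⊗_R (^R A_L) ⊗_L (_L A)`. -/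
def mixedRel₂ (Bl : LeftBialgebroidData A L) (Br : RightBialgebroidData A R) :
    Submodule ℤ (A ⊗[ℤ] (A ⊗[ℤ] A)) :=
  trel3 (fun r a => a * Br.s r) (fun r b => b * Br.t r)
        (fun l b => Bl.t l * b) (fun l c => Bl.s l * c)

variable (A L R) in
/-- A symmetrized Hopf algebroid in the sense of Proposition 4.2 (iii) of Böhm–Szlachányi:
compatible left and right bialgebroid structures over anti-isomorphic base rings, connected
by an additive bijection `S` satisfying the twisted bimodule and antipode conditions. -/
structure SymHopfAlgebroid : Type _ where
  left : LeftBialgebroid A L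
  right : RightBialgebroid A R
  S : A ≃+ A
  base_op : Nonempty (L ≃+* Rᵐᵒᵖ)
  st_img : ∀ l, ∃ r, left.s l = right.t r
  ts_img : ∀ r, ∃ l, right.t r = left.s l
  ts_img' : ∀ l, ∃ r, left.t l = right.s r
  st_img' : ∀ r, ∃ l, right.s r = left.t l
  mixed₁ : ∀ a, Sub.sub ((TensorProduct.assoc ℤ A A A)
        ((LinearMap.rTensor A left.Δ.toIntLinearMap) (right.Δ a)))
      ((LinearMap.lTensor A right.Δ.toIntLinearMap) (left.Δ a))
      ∈ mixedRel₁ left.toLeftBialgebroidData right.toRightBialgebroidData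
  mixed₂ : ∀ a, Sub.sub ((TensorProduct.assoc ℤ A A A)
        ((LinearMap.rTensor A right.Δ.toIntLinearMap) (left.Δ a)))
      ((LinearMap.lTensor A left.Δ.toIntLinearMap) (right.Δ a))
      ∈ mixedRel₂ left.toLeftBialgebroidData right.toRightBialgebroidData
  S_twist_L : ∀ l l' a, S (left.t l * a * left.t l') = left.s l' * S a * left.s l
  S_twist_R : ∀ r r' a, S (right.t r' * a * right.t r) = right.s r * S a * right.s r'
  antipode_L : ∀ a, LinearMap.mul' ℤ A
      ((LinearMap.rTensor A S.toAddMonoidHom.toIntLinearMap) (left.Δ a))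
      = right.s (right.π a)
  antipode_R : ∀ a, LinearMap.mul' ℤ A
      ((LinearMap.lTensor A S.toAddMonoidHom.toIntLinearMap) (right.Δ a))
      = left.s (left.π a)

namespace SymHopfAlgebroid

variable (H : SymHopfAlgebroid A L R)

/-- Left integrals: invariants of the left regular module. -/
def IsLeftIntegral (ℓ : A) : Prop := ∀ a, a * ℓ = H.left.s (H.left.π a) * ℓ

/-- Right integrals: invariants of the right regular module. -/
def IsRightIntegral (x : A) : Prop := ∀ a, x * a = x * H.right.s (H.right.π a)

/-- Membership in the dual `A^* = Hom(A^R, R^R)`. -/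
def InAstarR (φ : A →+ R) : Prop := ∀ a r, φ (a * H.right.s r) = φ a * r

/-- Membership in the dual `^*A = Hom(^R A, ^R R)`. -/
def InstarAR (φ : A →+ R) : Prop := ∀ a r, φ (a * H.right.t r) = r * φ a

/-- Membership in the dual `A_* = Hom(A_L, L_L)`. -/
def InAstarL (φ : A →+ L) : Prop := ∀ a l, φ (H.left.t l * a) = φ a * l

/-- Membership in the dual `_*A = Hom(_L A, _L L)`. -/
def InstarAL (φ : A →+ L) : Prop := ∀ a l, φ (H.left.s l * a) = l * φ a

/-- `φ ⇀ a = a⁽²⁾ t_R (φ a⁽¹⁾)`. -/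
noncomputable def rharp (φ : A →+ R) (a : A) : A :=
  LinearMap.mul' ℤ A ((TensorProduct.comm ℤ A A)
    ((LinearMap.rTensor A (H.right.t.comp φ).toIntLinearMap) (H.right.Δ a)))

/-- `φ ⇁ a = a⁽¹⁾ s_R (φ a⁽²⁾)`. -/
noncomputable def lharp (φ : A →+ R) (a : A) : A :=
  LinearMap.mul' ℤ A
    ((LinearMap.lTensor A (H.right.s.toAddMonoidHom.comp φ).toIntLinearMap) (H.right.Δ a))

/-- `a ↼ φ = s_L (φ a₍₁₎) a₍₂₎`. -/
noncomputable def rharpL (φ : A →+ L) (a : A) : A :=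
  LinearMap.mul' ℤ A
    ((LinearMap.rTensor A (H.left.s.toAddMonoidHom.comp φ).toIntLinearMap) (H.left.Δ a))

/-- `a ↽ φ = t_L (φ a₍₂₎) a₍₁₎`. -/
noncomputable def lharpL (φ : A →+ L) (a : A) : A :=
  LinearMap.mul' ℤ A ((TensorProduct.comm ℤ A A)
    ((LinearMap.lTensor A (H.left.t.comp φ).toIntLinearMap) (H.left.Δ a)))

/-- Non-degeneracy of a left integral: the maps `ℓ_R : A^* → A` and `_Rℓ : ^*A → A`
are bijective. -/
def IsNonDegLeftIntegral (ℓ : A) : Prop :=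
  H.IsLeftIntegral ℓ ∧
  Function.Bijective (fun φ : {φ : A →+ R // H.InAstarR φ} => H.rharp φ.1 ℓ) ∧
  Function.Bijective (fun φ : {φ : A →+ R // H.InstarAR φ} => H.lharp φ.1 ℓ)

end SymHopfAlgebroid

end HopfAlgd


namespace HopfAlgd
namespace SymHopfAlgebroid

variable {A L R : Type*} [Ring A] [Ring L] [Ring R] (H : SymHopfAlgebroid A L R)

lemma key (β ψ : A →+ R) (hβ : H.InAstarR β) (hψ : H.InstarAR ψ) (a : A) :
    β (H.lharp ψ a) = ψ (H.rharp β a) := by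
  unfold SymHopfAlgebroid.lharp SymHopfAlgebroid.rharp
  generalize H.right.Δ a = x
  induction x using TensorProduct.induction_on with
  | zero => simp
  | tmul u v =>
      simp only [LinearMap.rTensor_tmul, LinearMap.lTensor_tmul, TensorProduct.comm_tmul,
        LinearMap.mul'_apply, AddMonoidHom.coe_toIntLinearMap, AddMonoidHom.coe_comp,
        Function.comp_apply]
      rw [show H.right.s.toAddMonoidHom (ψ v) = H.right.s (ψ v) from rfl, hβ u (ψ v), hψ v (β u)]
  | add x y hx hy => simp only [map_add, hx, hy]

lemma rharp_addφ (φ₁ φ₂ : A →+ R) (a : A) :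
    H.rharp (φ₁ + φ₂) a = H.rharp φ₁ a + H.rharp φ₂ a := by
  unfold SymHopfAlgebroid.rharp
  generalize H.right.Δ a = x
  induction x using TensorProduct.induction_on with
  | zero => simp
  | tmul u v =>
      simp only [LinearMap.rTensor_tmul, TensorProduct.comm_tmul, LinearMap.mul'_apply,
        AddMonoidHom.coe_toIntLinearMap, AddMonoidHom.coe_comp, Function.comp_apply,
        AddMonoidHom.add_apply, map_add, mul_add]
  | add x y hx hy => simp only [map_add, hx, hy]; abel

/-- left scalar action of `R` on duals. -/
def rsmul (r : R) (φ : A →+ R) : A →+ R where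
  toFun a := r * φ a
  map_zero' := by simp
  map_add' a b := by simp [mul_add]

lemma InAstarR_rsmul (r : R) (φ : A →+ R) (hφ : H.InAstarR φ) :
    H.InAstarR (rsmul r φ) := by
  intro a r'
  simp only [rsmul, AddMonoidHom.coe_mk, ZeroHom.coe_mk, hφ a r', mul_assoc]

lemma InAstarR_add (φ₁ φ₂ : A →+ R) (h₁ : H.InAstarR φ₁) (h₂ : H.InAstarR φ₂) :
    H.InAstarR (φ₁ + φ₂) := by
  intro a r
  simp only [AddMonoidHom.add_apply, h₁ a r, h₂ a r, add_mul]

lemma rharp_rsmul (r : R) (φ : A →+ R) (a : A) :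
    H.rharp (rsmul r φ) a = H.rharp φ a * H.right.t r := by
  unfold SymHopfAlgebroid.rharp
  generalize H.right.Δ a = x
  induction x using TensorProduct.induction_on with
  | zero => simp
  | tmul u v =>
      simp only [LinearMap.rTensor_tmul, TensorProduct.comm_tmul, LinearMap.mul'_apply,
        AddMonoidHom.coe_toIntLinearMap, AddMonoidHom.coe_comp, Function.comp_apply,
        rsmul, AddMonoidHom.coe_mk, ZeroHom.coe_mk, H.right.t_mul, mul_assoc]
  | add x y hx hy => simp only [map_add, hx, hy, add_mul]

end SymHopfAlgebroid
end HopfAlgd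
open HopfAlgd in
/-- (Lemma 5.17.)  If the module `A^R` is finitely generated projective,
then a left integral `ℓ` is non-degenerate as soon as the single map
`ℓ_R : A^* → A, φ ↦ φ ⇀ ℓ` is bijective. -/
theorem statement19 {A L R : Type*} [Ring A] [Ring L] [Ring R]
    (H : SymHopfAlgebroid A L R)
    (hfg : ∃ (n : ℕ) (b : Fin n → A) (β : Fin n → (A →+ R)),
      (∀ i, H.InAstarR (β i)) ∧ ∀ a : A, a = ∑ i, b i * H.right.s (β i a))
    (ℓ : A) (hint : H.IsLeftIntegral ℓ) :
    H.IsNonDegLeftIntegral ℓ ↔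
      Function.Bijective (fun φ : {φ : A →+ R // H.InAstarR φ} => H.rharp φ.1 ℓ) := by
  constructor
  · exact fun h => h.2.1
  · intro hbij
    refine ⟨hint, hbij, ?_, ?_⟩
    · -- injectivity of `_Rℓ`
      intro ψ₁ ψ₂ hψ
      simp only at hψ
      apply Subtype.ext
      ext a
      obtain ⟨β, hβ⟩ := hbij.2 a
      simp only at hβ
      calc ψ₁.1 a = ψ₁.1 (H.rharp β.1 ℓ) := by rw [hβ]
        _ = β.1 (H.lharp ψ₁.1 ℓ) := (H.key β.1 ψ₁.1 β.2 ψ₁.2 ℓ).symm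
        _ = β.1 (H.lharp ψ₂.1 ℓ) := by rw [hψ]
        _ = ψ₂.1 (H.rharp β.1 ℓ) := H.key β.1 ψ₂.1 β.2 ψ₂.2 ℓ
        _ = ψ₂.1 a := by rw [hβ]
    · -- surjectivity of `_Rℓ`
      intro v
      obtain ⟨n, bb, βs, hβs, hdual⟩ := hfg
      let e : {φ : A →+ R // H.InAstarR φ} ≃ A := Equiv.ofBijective _ hbij
      have he : ∀ φ : {φ : A →+ R // H.InAstarR φ}, e φ = H.rharp φ.1 ℓ := fun _ => rfl
      have hes : ∀ a : A, H.rharp (e.symm a).1 ℓ = a := fun a => e.apply_symm_apply a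
      have hadd : ∀ a b : A,
          (e.symm (a + b)).1 = (e.symm a).1 + (e.symm b).1 := by
        intro a b
        have : e.symm (a + b) = ⟨(e.symm a).1 + (e.symm b).1,
            H.InAstarR_add _ _ (e.symm a).2 (e.symm b).2⟩ := by
          apply e.injective
          rw [Equiv.apply_symm_apply]
          rw [he, H.rharp_addφ, hes, hes]
        rw [this]
      have hsm : ∀ (a : A) (r : R), e.symm (a * H.right.t r)
          = ⟨SymHopfAlgebroid.rsmul r (e.symm a).1,
             H.InAstarR_rsmul r _ (e.symm a).2⟩ := by
        intro a r
        apply e.injective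
        rw [Equiv.apply_symm_apply, he, H.rharp_rsmul, hes]
      let ψ0 : A →+ R := AddMonoidHom.mk' (fun a => (e.symm a).1 v)
        (fun a b => by
          show (e.symm (a + b)).1 v = (e.symm a).1 v + (e.symm b).1 v
          rw [hadd]; simp)
      have hψ0 : H.InstarAR ψ0 := by
        intro a r
        show (e.symm (a * H.right.t r)).1 v = r * (e.symm a).1 v
        rw [hsm a r]
        rfl
      refine ⟨⟨ψ0, hψ0⟩, ?_⟩
      simp only
      have hcoef : ∀ i, βs i (H.lharp ψ0 ℓ) = βs i v := by
        intro i
        rw [H.key (βs i) ψ0 (hβs i) hψ0 ℓ]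
        show (e.symm (H.rharp (βs i) ℓ)).1 v = βs i v
        have : e.symm (H.rharp (βs i) ℓ) = ⟨βs i, hβs i⟩ :=
          e.symm_apply_apply ⟨βs i, hβs i⟩
        rw [this]
      calc H.lharp ψ0 ℓ = ∑ i, bb i * H.right.s (βs i (H.lharp ψ0 ℓ)) := hdual _
        _ = ∑ i, bb i * H.right.s (βs i v) := by simp_rw [hcoef]
        _ = v := (hdual v).symm
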